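/- Let n ≥ 1, x > 0, 0 ≤ m < n, and let y, z ≥ 0 satisfy y + z = x. Let v* = v_y + v_z ∈ ℝⁿ be any duo-equidistant vector in Γ(m, y, z), set v = m·y + (m+1)·z (the total mass of v*), and let Δ_Z = ⌊(n+1)/(m+2)⌋. Then for every j with 1 ≤ j ≤ Δ_Z: f_j(v*) = (n + 1 − j)·x − j·v; in particular every window of j consecutive coordinates of v* has sum at most x. -/

import Mathlib

open Finset

/-- `f_j v = Σ_{l=1}^{n+1−j} (x − Σ_{i=0}^{j−1} v_{l+i})⁺`, the sum of positive parts of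
the deficits of all length-`j` windows of consecutive coordinates (`l` is 0-indexed here). -/
noncomputable def fj (n : ℕ) (x : ℝ) (j : ℕ) (v : Fin n → ℝ) : ℝ :=
  ∑ l ∈ Finset.range (n + 1 - j),
    max (x - ∑ i ∈ Finset.range j, if h : l + i < n then v ⟨l + i, h⟩ else 0) 0

/-- A duo-equidistant vector `v = v_y + v_z ∈ Γ(m, y, z)`: `v_y` places mass `y` at the `m`
partial sums `Σ_{k=1}^{j} Δ_{y,k}` (`1 ≤ j ≤ m`) of positive integers
`Δ_{y,1},…,Δ_{y,m+1} ∈ {Δ_Y, Δ_Y+1}` (`Δ_Y = ⌊(n+1)/(m+1)⌋`) summing to `n+1`, and `v_z`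
places mass `z` at the `m+1` partial sums `Σ_{k=1}^{j} Δ_{z,k}` (`1 ≤ j ≤ m+1`) of positive
integers `Δ_{z,1},…,Δ_{z,m+2} ∈ {Δ_Z, Δ_Z+1}` (`Δ_Z = ⌊(n+1)/(m+2)⌋`) summing to `n+1`.
Indices of `v` are 1-based in this description (`Fin n` is 0-based, whence the `+ 1`). -/
def IsDuoEquidistant (n m : ℕ) (y z : ℝ) (v : Fin n → ℝ) : Prop :=
  ∃ vy vz : Fin n → ℝ, ∃ Δy Δz : ℕ → ℕ,
    v = vy + vz ∧
    (∀ k ∈ Finset.Icc 1 (m + 1), 0 < Δy k) ∧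
    (∀ k ∈ Finset.Icc 1 (m + 1),
      Δy k = (n + 1) / (m + 1) ∨ Δy k = (n + 1) / (m + 1) + 1) ∧
    (∑ k ∈ Finset.Icc 1 (m + 1), Δy k = n + 1) ∧
    (∀ k ∈ Finset.Icc 1 (m + 2), 0 < Δz k) ∧
    (∀ k ∈ Finset.Icc 1 (m + 2),
      Δz k = (n + 1) / (m + 2) ∨ Δz k = (n + 1) / (m + 2) + 1) ∧
    (∑ k ∈ Finset.Icc 1 (m + 2), Δz k = n + 1) ∧
    (∀ i : Fin n,
      ((∃ j, 1 ≤ j ∧ j ≤ m ∧ (i : ℕ) + 1 = ∑ k ∈ Finset.Icc 1 j, Δy k) → vy i = y) ∧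
      (¬ (∃ j, 1 ≤ j ∧ j ≤ m ∧ (i : ℕ) + 1 = ∑ k ∈ Finset.Icc 1 j, Δy k) → vy i = 0)) ∧
    (∀ i : Fin n,
      ((∃ j, 1 ≤ j ∧ j ≤ m + 1 ∧ (i : ℕ) + 1 = ∑ k ∈ Finset.Icc 1 j, Δz k) → vz i = z) ∧
      (¬ (∃ j, 1 ≤ j ∧ j ≤ m + 1 ∧ (i : ℕ) + 1 = ∑ k ∈ Finset.Icc 1 j, Δz k) → vz i = 0))

open scoped Classical

namespace S16

noncomputable def W (n : ℕ) (w : Fin n → ℝ) (p : ℕ) : ℝ :=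
  if h : p < n then w ⟨p, h⟩ else 0

def S (Δ : ℕ → ℕ) (k : ℕ) : ℕ := ∑ k' ∈ Finset.Icc 1 k, Δ k'

def MassPt (c : ℕ) (Δ : ℕ → ℕ) (p : ℕ) : Prop :=
  ∃ k, 1 ≤ k ∧ k ≤ c ∧ p + 1 = S Δ k

lemma S_ioc (Δ : ℕ → ℕ) (k : ℕ) : S Δ k = ∑ k' ∈ Finset.Ioc 0 k, Δ k' := by
  unfold S; congr 1

lemma S_gap {c d : ℕ} {Δ : ℕ → ℕ} (hd : ∀ k ∈ Finset.Icc 1 (c + 1), d ≤ Δ k)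
    {k1 k2 : ℕ} (h2 : k1 < k2) (h3 : k2 ≤ c + 1) :
    S Δ k1 + d ≤ S Δ k2 := by
  have hs : S Δ k1 + ∑ k' ∈ Finset.Ioc k1 k2, Δ k' = S Δ k2 := by
    rw [S_ioc, S_ioc]
    exact Finset.sum_Ioc_consecutive Δ (Nat.zero_le k1) (le_of_lt h2)
  have h1 : d ≤ Δ (k1 + 1) := hd _ (by simp [Finset.mem_Icc]; omega)
  have h2' : Δ (k1 + 1) ≤ ∑ k' ∈ Finset.Ioc k1 k2, Δ k' :=
    Finset.single_le_sum (fun i _ => Nat.zero_le _) (by simp [Finset.mem_Ioc]; omega)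
  omega

lemma S_zero (Δ : ℕ → ℕ) : S Δ 0 = 0 := by simp [S]

lemma mass_lb {n c d : ℕ} {Δ : ℕ → ℕ} (hd : ∀ k ∈ Finset.Icc 1 (c + 1), d ≤ Δ k)
    (hsum : S Δ (c + 1) = n + 1) {p : ℕ} (hp : MassPt c Δ p) :
    d ≤ p + 1 ∧ p + 1 + d ≤ n + 1 := by
  obtain ⟨k, hk1, hk2, hk3⟩ := hp
  have h1 := S_gap hd (show 0 < k by omega) (by omega)
  have h2 := S_gap hd (show k < c + 1 by omega) (le_refl _)
  rw [S_zero] at h1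
  omega

lemma mass_gap {c d : ℕ} {Δ : ℕ → ℕ} (hd : ∀ k ∈ Finset.Icc 1 (c + 1), d ≤ Δ k)
    {p q : ℕ} (hp : MassPt c Δ p) (hq : MassPt c Δ q) (hpq : p < q) :
    p + d ≤ q := by
  obtain ⟨k1, hk11, hk12, hk13⟩ := hp
  obtain ⟨k2, hk21, hk22, hk23⟩ := hq
  rcases lt_trichotomy k1 k2 with h | h | h
  · have := S_gap hd h (by omega); omega
  · subst h; omega
  · have := S_gap hd h (by omega); omega

lemma W_val {n c : ℕ} {a : ℝ} {Δ : ℕ → ℕ} {w : Fin n → ℝ}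
    (hw : ∀ i : Fin n, (MassPt c Δ (i : ℕ) → w i = a) ∧ (¬ MassPt c Δ (i : ℕ) → w i = 0))
    (p : ℕ) (hp : p < n) :
    W n w p = if MassPt c Δ p then a else 0 := by
  classical
  unfold W
  rw [dif_pos hp]
  by_cases h : MassPt c Δ p
  · rw [if_pos h]; exact (hw ⟨p, hp⟩).1 h
  · rw [if_neg h]; exact (hw ⟨p, hp⟩).2 h

lemma W_zero {n : ℕ} {w : Fin n → ℝ} {p : ℕ} (hp : ¬ p < n) : W n w p = 0 := by
  unfold W; rw [dif_neg hp]

lemma window_bound {n c d j : ℕ} {a : ℝ} {Δ : ℕ → ℕ} {w : Fin n → ℝ}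
    (ha : 0 ≤ a)
    (hd : ∀ k ∈ Finset.Icc 1 (c + 1), d ≤ Δ k)
    (hw : ∀ i : Fin n, (MassPt c Δ (i : ℕ) → w i = a) ∧ (¬ MassPt c Δ (i : ℕ) → w i = 0))
    (hjd : j ≤ d) (l : ℕ) (hl : l + j ≤ n) :
    0 ≤ (∑ p ∈ Finset.Ico l (l + j), W n w p) ∧
      (∑ p ∈ Finset.Ico l (l + j), W n w p) ≤ a := by
  classical
  have hval : ∀ p ∈ Finset.Ico l (l + j), W n w p = if MassPt c Δ p then a else 0 := by
    intro p hp
    simp only [Finset.mem_Ico] at hp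
    exact W_val hw p (by omega)
  rw [Finset.sum_congr rfl hval, ← Finset.sum_filter]
  rw [Finset.sum_const]
  have hcard : ((Finset.Ico l (l + j)).filter (fun p => MassPt c Δ p)).card ≤ 1 := by
    apply Finset.card_le_one.2
    intro p hp q hq
    simp only [Finset.mem_filter, Finset.mem_Ico] at hp hq
    rcases lt_trichotomy p q with h | h | h
    · have := mass_gap hd hp.2 hq.2 h; omega
    · exact h
    · have := mass_gap hd hq.2 hp.2 h; omega
  constructor
  · positivity
  · calc ((Finset.Ico l (l + j)).filter (fun p => MassPt c Δ p)).card • a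
        ≤ 1 • a := by
          apply nsmul_le_nsmul_left ha hcard
      _ = a := one_smul _ _

lemma total_mass {n c d : ℕ} {a : ℝ} {Δ : ℕ → ℕ} {w : Fin n → ℝ}
    (hd : ∀ k ∈ Finset.Icc 1 (c + 1), d ≤ Δ k) (hd1 : 1 ≤ d)
    (hsum : S Δ (c + 1) = n + 1)
    (hw : ∀ i : Fin n, (MassPt c Δ (i : ℕ) → w i = a) ∧ (¬ MassPt c Δ (i : ℕ) → w i = 0)) :
    ∑ p ∈ Finset.range n, W n w p = (c : ℝ) * a := by
  classical
  have hval : ∀ p ∈ Finset.range n, W n w p = if MassPt c Δ p then a else 0 := by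
    intro p hp
    simp only [Finset.mem_range] at hp
    exact W_val hw p hp
  rw [Finset.sum_congr rfl hval, ← Finset.sum_filter, Finset.sum_const]
  have hcard : ((Finset.range n).filter (fun p => MassPt c Δ p)).card = c := by
    have := Finset.card_bij (s := Finset.Icc 1 c)
      (t := (Finset.range n).filter (fun p => MassPt c Δ p))
      (fun k _ => S Δ k - 1)
      (by
        intro k hk
        simp only [Finset.mem_Icc] at hk
        have h1 := S_gap hd (show 0 < k by omega) (by omega)
        have h2 := S_gap hd (show k < c + 1 by omega) (le_refl _)
        rw [S_zero] at h1
        rw [hsum] at h2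
        simp only [Finset.mem_filter, Finset.mem_range]
        exact ⟨by omega, ⟨k, hk.1, hk.2, by omega⟩⟩)
      (by
        intro k1 hk1 k2 hk2 heq
        simp only [Finset.mem_Icc] at hk1 hk2
        have e1 := S_gap hd (show 0 < k1 by omega) (show k1 ≤ c + 1 by omega)
        have e2 := S_gap hd (show 0 < k2 by omega) (show k2 ≤ c + 1 by omega)
        rw [S_zero] at e1 e2
        rcases lt_trichotomy k1 k2 with h | h | h
        · have := S_gap hd h (show k2 ≤ c + 1 by omega); omega
        · exact h
        · have := S_gap hd h (show k1 ≤ c + 1 by omega); omega)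
      (by
        intro b hb
        simp only [Finset.mem_filter, Finset.mem_range] at hb
        obtain ⟨k, hk1, hk2, hk3⟩ := hb.2
        refine ⟨k, by simp [Finset.mem_Icc]; omega, ?_⟩
        omega)
    rw [Nat.card_Icc] at this
    omega
  rw [hcard, nsmul_eq_mul]

lemma double_sum {n c d j : ℕ} {a : ℝ} {Δ : ℕ → ℕ} {w : Fin n → ℝ}
    (hd : ∀ k ∈ Finset.Icc 1 (c + 1), d ≤ Δ k)
    (hsum : S Δ (c + 1) = n + 1)
    (hw : ∀ i : Fin n, (MassPt c Δ (i : ℕ) → w i = a) ∧ (¬ MassPt c Δ (i : ℕ) → w i = 0))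
    (hj1 : 1 ≤ j) (hjd : j ≤ d) (hjn : j ≤ n) :
    ∑ l ∈ Finset.range (n + 1 - j), ∑ p ∈ Finset.Ico l (l + j), W n w p
      = (j : ℝ) * ((c : ℝ) * a) := by
  classical
  have step1 : ∀ l ∈ Finset.range (n + 1 - j),
      ∑ p ∈ Finset.Ico l (l + j), W n w p
        = ∑ p ∈ Finset.range n, if l ≤ p ∧ p < l + j then W n w p else 0 := by
    intro l hl
    simp only [Finset.mem_range] at hl
    rw [← Finset.sum_filter]
    congr 1
    ext p
    simp only [Finset.mem_filter, Finset.mem_range, Finset.mem_Ico]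
    omega
  rw [Finset.sum_congr rfl step1, Finset.sum_comm]
  have step2 : ∀ p ∈ Finset.range n,
      (∑ l ∈ Finset.range (n + 1 - j), if l ≤ p ∧ p < l + j then W n w p else 0)
        = (j : ℝ) * W n w p := by
    intro p hp
    simp only [Finset.mem_range] at hp
    rw [← Finset.sum_filter, Finset.sum_const]
    by_cases hz : W n w p = 0
    · rw [hz]; simp
    · have hmass : MassPt c Δ p := by
        by_contra h
        exact hz (by rw [W_val hw p hp, if_neg h])
      obtain ⟨hlb, hub⟩ := mass_lb hd hsum hmass
      have hfil : (Finset.range (n + 1 - j)).filter (fun l => l ≤ p ∧ p < l + j)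
          = Finset.Ico (p + 1 - j) (p + 1) := by
        ext l
        simp only [Finset.mem_filter, Finset.mem_range, Finset.mem_Ico]
        omega
      rw [hfil]
      rw [Nat.card_Ico]
      have : p + 1 - (p + 1 - j) = j := by omega
      rw [this, nsmul_eq_mul]
  rw [Finset.sum_congr rfl step2, ← Finset.mul_sum,
    total_mass hd (by omega) hsum hw]

lemma win_eq {n : ℕ} (w : Fin n → ℝ) (l j : ℕ) :
    (∑ i ∈ Finset.range j, W n w (l + i)) = ∑ p ∈ Finset.Ico l (l + j), W n w p := by
  rw [Finset.sum_Ico_eq_sum_range]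
  simp

lemma W_add {n : ℕ} (u w : Fin n → ℝ) (p : ℕ) :
    W n (u + w) p = W n u p + W n w p := by
  unfold W
  split
  · simp
  · simp

end S16

/-- For a duo-equidistant vector in `Γ(m, y, z)` with `y + z = x`, total mass
`v = m·y + (m+1)·z`, and `1 ≤ j ≤ Δ_Z`, `f_j(v*) = (n+1−j)·x − j·v`; in particular
every window of `j` consecutive coordinates has sum at most `x`. -/
theorem statement16 (n m : ℕ) (hn : 1 ≤ n) (hm : m < n) (x y z : ℝ) (hx : 0 < x)
    (hy : 0 ≤ y) (hz : 0 ≤ z) (hyz : y + z = x)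
    (vstar : Fin n → ℝ) (hv : IsDuoEquidistant n m y z vstar)
    (v : ℝ) (hvmass : v = (m : ℝ) * y + ((m : ℝ) + 1) * z)
    (j : ℕ) (hj1 : 1 ≤ j) (hj2 : j ≤ (n + 1) / (m + 2)) :
    fj n x j vstar = ((n : ℝ) + 1 - j) * x - (j : ℝ) * v ∧
    ∀ l ∈ Finset.range (n + 1 - j),
      (∑ i ∈ Finset.range j, if h : l + i < n then vstar ⟨l + i, h⟩ else 0) ≤ x := by
  obtain ⟨vy, vz, Δy, Δz, hvsum, hΔyp, hΔyo, hΔys, hΔzp, hΔzo, hΔzs, hvy, hvz⟩ := hv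
  have hwy : ∀ i : Fin n,
      (S16.MassPt m Δy (i : ℕ) → vy i = y) ∧ (¬ S16.MassPt m Δy (i : ℕ) → vy i = 0) := hvy
  have hwz : ∀ i : Fin n,
      (S16.MassPt (m + 1) Δz (i : ℕ) → vz i = z) ∧
        (¬ S16.MassPt (m + 1) Δz (i : ℕ) → vz i = 0) := hvz
  have hsy : S16.S Δy (m + 1) = n + 1 := hΔys
  have hsz : S16.S Δz (m + 1 + 1) = n + 1 := hΔzs
  have hdY : ∀ k ∈ Finset.Icc 1 (m + 1), (n + 1) / (m + 1) ≤ Δy k := by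
    intro k hk; rcases hΔyo k hk with h | h <;> omega
  have hdZ : ∀ k ∈ Finset.Icc 1 (m + 1 + 1), (n + 1) / (m + 2) ≤ Δz k := by
    intro k hk; rcases hΔzo k hk with h | h <;> omega
  have hjdY : j ≤ (n + 1) / (m + 1) :=
    le_trans hj2 (Nat.div_le_div_left (by omega) (by omega))
  have hjn : j ≤ n := by
    have h1 : (n + 1) / (m + 2) * (m + 2) ≤ n + 1 := Nat.div_mul_le_self _ _
    have h2 : j * (m + 2) ≤ (n + 1) / (m + 2) * (m + 2) := Nat.mul_le_mul_right _ hj2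
    have h3 : j * 2 ≤ j * (m + 2) := Nat.mul_le_mul_left _ (by omega)
    omega
  have hWs : ∀ p, (if h : p < n then vstar ⟨p, h⟩ else 0) = S16.W n vy p + S16.W n vz p := by
    intro p
    rw [hvsum]
    exact S16.W_add vy vz p
  have hwin : ∀ l, (∑ i ∈ Finset.range j, if h : l + i < n then vstar ⟨l + i, h⟩ else 0)
      = (∑ p ∈ Finset.Ico l (l + j), S16.W n vy p)
        + (∑ p ∈ Finset.Ico l (l + j), S16.W n vz p) := by
    intro l
    have h1 : (∑ i ∈ Finset.range j, if h : l + i < n then vstar ⟨l + i, h⟩ else 0)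
        = ∑ i ∈ Finset.range j, (S16.W n vy (l + i) + S16.W n vz (l + i)) :=
      Finset.sum_congr rfl (fun i _ => hWs (l + i))
    rw [h1, Finset.sum_add_distrib, S16.win_eq, S16.win_eq]
  have hby : ∀ l ∈ Finset.range (n + 1 - j),
      0 ≤ (∑ p ∈ Finset.Ico l (l + j), S16.W n vy p) ∧
        (∑ p ∈ Finset.Ico l (l + j), S16.W n vy p) ≤ y := by
    intro l hl
    simp only [Finset.mem_range] at hl
    exact S16.window_bound hy hdY hwy hjdY l (by omega)
  have hbz : ∀ l ∈ Finset.range (n + 1 - j),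
      0 ≤ (∑ p ∈ Finset.Ico l (l + j), S16.W n vz p) ∧
        (∑ p ∈ Finset.Ico l (l + j), S16.W n vz p) ≤ z := by
    intro l hl
    simp only [Finset.mem_range] at hl
    exact S16.window_bound hz hdZ hwz hj2 l (by omega)
  constructor
  · have heq : fj n x j vstar = ∑ l ∈ Finset.range (n + 1 - j),
        (x - ((∑ p ∈ Finset.Ico l (l + j), S16.W n vy p)
          + (∑ p ∈ Finset.Ico l (l + j), S16.W n vz p))) := by
      unfold fj
      apply Finset.sum_congr rfl
      intro l hl
      rw [hwin l]
      apply max_eq_left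
      have h1 := hby l hl
      have h2 := hbz l hl
      linarith
    rw [heq, Finset.sum_sub_distrib, Finset.sum_add_distrib,
      S16.double_sum hdY hsy hwy hj1 hjdY hjn,
      S16.double_sum hdZ hsz hwz hj1 hj2 hjn,
      Finset.sum_const, Finset.card_range, nsmul_eq_mul, hvmass]
    push_cast [Nat.cast_sub (show j ≤ n + 1 by omega)]
    ring
  · intro l hl
    rw [hwin l]
    have h1 := hby l hl
    have h2 := hbz l hl
    linarith
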